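/- Let λ > 0 and let X be a real-valued random variable with X ≤ 1 almost surely and with X and X² integrable. Then E[e^{λX}] ≤ exp(λ·E[X] + (e^λ − λ − 1)·E[X²]). -/

import Mathlib

open MeasureTheory

private lemma intRep (t : ℝ) (ht : t ≠ 0) :
    ∫ s in (0:ℝ)..1, (1 - s) * Real.exp (t * s) = (Real.exp t - t - 1) / t ^ 2 := by
  have h : ∀ s ∈ Set.uIcc (0:ℝ) 1,
      HasDerivAt (fun s => (1 - s) * Real.exp (t * s) / t + Real.exp (t * s) / t ^ 2)
        ((1 - s) * Real.exp (t * s)) s := by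
    intro s _
    have he : HasDerivAt (fun s : ℝ => Real.exp (t * s)) (Real.exp (t * s) * t) s := by
      simpa [mul_comm, Function.comp_def] using (Real.hasDerivAt_exp (t * s)).comp s
        ((hasDerivAt_id s).const_mul t)
    have h1 : HasDerivAt (fun s : ℝ => (1 - s) * Real.exp (t * s) / t)
        (((-1) * Real.exp (t * s) + (1 - s) * (Real.exp (t * s) * t)) / t) s := by
      simpa using (((hasDerivAt_const s (1:ℝ)).sub (hasDerivAt_id s)).mul he).div_const t
    have h2 : HasDerivAt (fun s : ℝ => Real.exp (t * s) / t ^ 2)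
        ((Real.exp (t * s) * t) / t ^ 2) s := he.div_const _
    have := h1.add h2
    refine this.congr_deriv ?_
    field_simp
    ring
  have hcont : IntervalIntegrable (fun s => (1 - s) * Real.exp (t * s)) MeasureTheory.volume 0 1 :=
    (Continuous.mul (by continuity) (by continuity)).intervalIntegrable 0 1
  rw [intervalIntegral.integral_eq_sub_of_hasDerivAt h hcont]
  field_simp
  rw [mul_zero, Real.exp_zero]
  ring

private lemma key (c t : ℝ) (hc : 0 < c) (ht : t ≤ c) :
    Real.exp t ≤ 1 + t + (Real.exp c - c - 1) / c ^ 2 * t ^ 2 := by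
  have hgc : 0 ≤ Real.exp c - c - 1 := by
    have := Real.add_one_le_exp c; linarith
  rcases eq_or_ne t 0 with rfl | ht0
  · have : (0:ℝ) ≤ (Real.exp c - c - 1) / c ^ 2 * (0:ℝ) ^ 2 := by positivity
    simp only [Real.exp_zero, mul_zero, add_zero]
    linarith [this]
  · have hmono : ∫ s in (0:ℝ)..1, (1 - s) * Real.exp (t * s)
        ≤ ∫ s in (0:ℝ)..1, (1 - s) * Real.exp (c * s) := by
      apply intervalIntegral.integral_mono_on zero_le_one
        ((Continuous.mul (by continuity) (by continuity)).intervalIntegrable 0 1)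
        ((Continuous.mul (by continuity) (by continuity)).intervalIntegrable 0 1)
      intro s hs
      have h1 : (0:ℝ) ≤ 1 - s := by linarith [hs.2]
      have h2 : Real.exp (t * s) ≤ Real.exp (c * s) :=
        Real.exp_le_exp.2 (mul_le_mul_of_nonneg_right ht hs.1)
      exact mul_le_mul_of_nonneg_left h2 h1
    rw [intRep t ht0, intRep c hc.ne'] at hmono
    have ht2 : (0:ℝ) < t ^ 2 := by positivity
    have h2 := mul_le_mul_of_nonneg_right hmono ht2.le
    rw [div_mul_cancel₀ _ ht2.ne'] at h2
    have h3 : (Real.exp c - c - 1) / c ^ 2 * t ^ 2 = (Real.exp c - c - 1) / c ^ 2 * t ^ 2 := rfl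
    linarith [h2]

theorem integral_exp_le_of_le_one {Ω : Type*} [MeasurableSpace Ω] (μ : Measure Ω)
    [IsProbabilityMeasure μ] (X : Ω → ℝ) (lam : ℝ) (hlam : 0 < lam)
    (hX1 : ∀ᵐ ω ∂μ, X ω ≤ 1)
    (hX : Integrable X μ) (hX2 : Integrable (fun ω => (X ω) ^ 2) μ) :
    ∫ ω, Real.exp (lam * X ω) ∂μ ≤
      Real.exp (lam * ∫ ω, X ω ∂μ + (Real.exp lam - lam - 1) * ∫ ω, (X ω) ^ 2 ∂μ) := by
  set g := Real.exp lam - lam - 1 with hg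
  have hptwise : ∀ᵐ ω ∂μ, Real.exp (lam * X ω) ≤ 1 + lam * X ω + g * X ω ^ 2 := by
    filter_upwards [hX1] with ω hω
    have h := key lam (lam * X ω) hlam (by nlinarith)
    rw [← hg] at h
    have heq : g / lam ^ 2 * (lam * X ω) ^ 2 = g * X ω ^ 2 := by
      field_simp
    rw [heq] at h
    exact h
  have ha : Integrable (fun ω => 1 + lam * X ω) μ :=
    (integrable_const 1).add (hX.const_mul lam)
  have hbound : Integrable (fun ω => 1 + lam * X ω + g * X ω ^ 2) μ :=
    ha.add (hX2.const_mul g)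
  have hmeas : AEStronglyMeasurable (fun ω => Real.exp (lam * X ω)) μ :=
    Real.continuous_exp.comp_aestronglyMeasurable (hX.1.const_mul lam)
  have hexp_int : Integrable (fun ω => Real.exp (lam * X ω)) μ := by
    apply Integrable.mono' hbound hmeas
    filter_upwards [hptwise] with ω hω
    rw [Real.norm_eq_abs, abs_of_pos (Real.exp_pos _)]
    exact hω
  have h1 : ∫ ω, Real.exp (lam * X ω) ∂μ ≤ ∫ ω, (1 + lam * X ω + g * X ω ^ 2) ∂μ :=
    integral_mono_ae hexp_int hbound hptwise
  have h2 : ∫ ω, (1 + lam * X ω + g * X ω ^ 2) ∂μ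
      = 1 + lam * ∫ ω, X ω ∂μ + g * ∫ ω, X ω ^ 2 ∂μ := by
    rw [integral_add ha (hX2.const_mul g),
      integral_add (integrable_const 1) (hX.const_mul lam), integral_const,
      integral_const_mul, integral_const_mul]
    simp
  have h3 : lam * ∫ ω, X ω ∂μ + g * ∫ ω, X ω ^ 2 ∂μ + 1
      ≤ Real.exp (lam * ∫ ω, X ω ∂μ + g * ∫ ω, X ω ^ 2 ∂μ) :=
    Real.add_one_le_exp _
  calc ∫ ω, Real.exp (lam * X ω) ∂μ ≤ 1 + lam * ∫ ω, X ω ∂μ + g * ∫ ω, X ω ^ 2 ∂μ := by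
        rw [← h2]; exact h1
    _ ≤ Real.exp (lam * ∫ ω, X ω ∂μ + g * ∫ ω, X ω ^ 2 ∂μ) := by linarith
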